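/- arXiv:2604.15243 — 3 statements merged into one kernel-verified Lean document; each statement's English description precedes it below -/
import Mathlib

section
/- Let G be a group with the property that for every virtually free abelian subgroup H of G there exists a subgroup H' of G commensurable with H such that the commensurator N_G[H] equals the normalizer N_G(H'). Then every subgroup L of G inherits the same property: for every virtually free abelian subgroup H of L there exists a subgroup H'' of L commensurable with H such that the commensurator of H in L equals the normalizer of H'' in L. -/
/-- A group is virtually `ℤ^r` if it contains a finite-index subgroup
isomorphic to the free abelian group `ℤ^r`. -/
def IsVirtuallyZpow (G : Type*) [Group G] (r : ℕ) : Prop :=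
  ∃ H : Subgroup G, H.FiniteIndex ∧ Nonempty (H ≃* Multiplicative (Fin r → ℤ))

/-- A group is virtually free abelian if it is virtually `ℤ^r` for some `r ≥ 0`. -/
def IsVirtuallyFreeAbelian (G : Type*) [Group G] : Prop :=
  ∃ r : ℕ, IsVirtuallyZpow G r

open Pointwise
open Subgroup

private lemma relindex_map_inj {G H : Type*} [Group G] [Group H] {f : G →* H}
    (hf : Function.Injective f) (A B : Subgroup G) :
    (A.map f).relIndex (B.map f) = A.relIndex B := by
  rw [← Subgroup.relIndex_comap, Subgroup.comap_map_eq_self_of_injective hf]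

private lemma commensurable_map_iff {G H : Type*} [Group G] [Group H] {f : G →* H}
    (hf : Function.Injective f) {A B : Subgroup G} :
    Commensurable (A.map f) (B.map f) ↔ Commensurable A B := by
  unfold Subgroup.Commensurable
  rw [relindex_map_inj hf, relindex_map_inj hf]

private lemma smul_map_subtype {G : Type*} [Group G] (L : Subgroup G) (g : L) (H : Subgroup L) :
    (ConjAct.toConjAct (g : G)) • (H.map L.subtype) =
      ((ConjAct.toConjAct g) • H).map L.subtype := by
  ext x
  simp only [Subgroup.mem_pointwise_smul_iff_inv_smul_mem, Subgroup.mem_map, ConjAct.smul_def,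
    ConjAct.ofConjAct_inv, ConjAct.ofConjAct_toConjAct, inv_inv, Subgroup.coe_subtype]
  constructor
  · rintro ⟨y, hy, hxy⟩
    refine ⟨g * y * g⁻¹, by simpa [mul_assoc] using hy, ?_⟩
    push_cast
    rw [hxy]
    group
  · rintro ⟨y, hy, rfl⟩
    refine ⟨g⁻¹ * y * g, by simpa [mul_assoc] using hy, ?_⟩
    push_cast
    group

private lemma virtFA_of_equiv {A B : Type*} [Group A] [Group B] (e : A ≃* B)
    (h : IsVirtuallyFreeAbelian A) : IsVirtuallyFreeAbelian B := by
  obtain ⟨r, H0, hfi, ⟨e0⟩⟩ := h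
  refine ⟨r, H0.map e.toMonoidHom, ⟨?_⟩,
    ⟨((Subgroup.equivMapOfInjective H0 e.toMonoidHom e.injective).symm.trans e0)⟩⟩
  rw [Subgroup.index_map_eq H0 e.surjective
    (by rw [show e.toMonoidHom.ker = ⊥ from (MonoidHom.ker_eq_bot_iff _).mpr e.injective]
        exact bot_le)]
  exact hfi.index_ne_zero

private lemma mem_commensurator_subgroup_iff {G : Type*} [Group G] (L : Subgroup G)
    (H : Subgroup L) (g : L) :
    g ∈ Commensurable.commensurator H ↔
      (g : G) ∈ Commensurable.commensurator (H.map L.subtype) := by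
  rw [Commensurable.commensurator_mem_iff, Commensurable.commensurator_mem_iff,
    smul_map_subtype, commensurable_map_iff L.subtype_injective]

private lemma normalizer_le_commensurator {G : Type*} [Group G] (K : Subgroup G) :
    Subgroup.normalizer (K : Set G) ≤ Commensurable.commensurator K := by
  intro g hg
  rw [Commensurable.commensurator_mem_iff]
  have : ConjAct.toConjAct g • K = K := by
    ext x
    rw [Subgroup.mem_pointwise_smul_iff_inv_smul_mem, ConjAct.smul_def, ConjAct.ofConjAct_inv,
      ConjAct.ofConjAct_toConjAct, inv_inv]
    have := Subgroup.mem_normalizer_iff.mp (inv_mem hg) x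
    simpa using this.symm
  rw [this]

/-- If for every virtually free abelian subgroup `H` of `G` there is a subgroup `H'` of `G`
commensurable with `H` whose normalizer equals the commensurator `N_G[H]`, then every
subgroup `L` of `G` has the same property. -/
theorem stmt0 {G : Type*} [Group G]
    (hG : ∀ H : Subgroup G, IsVirtuallyFreeAbelian H →
      ∃ H' : Subgroup G, Subgroup.Commensurable H H' ∧
        Subgroup.Commensurable.commensurator H = Subgroup.normalizer (H' : Set G)) :
    ∀ L : Subgroup G, ∀ H : Subgroup L, IsVirtuallyFreeAbelian H →
      ∃ H'' : Subgroup L, Subgroup.Commensurable H H'' ∧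
        Subgroup.Commensurable.commensurator H = Subgroup.normalizer (H'' : Set L) := by
  intro L H hH
  have hHhat : IsVirtuallyFreeAbelian (H.map L.subtype) :=
    virtFA_of_equiv (Subgroup.equivMapOfInjective H L.subtype L.subtype_injective) hH
  obtain ⟨H', hcom, heq⟩ := hG (H.map L.subtype) hHhat
  -- `H' ⊓ L` is commensurable with `H'`
  have hH'L : Commensurable H' (H' ⊓ L) := by
    constructor
    · rw [Subgroup.relIndex_eq_one.mpr inf_le_left]; exact one_ne_zero
    · have h1 : (H.map L.subtype).relIndex H' ≠ 0 := hcom.1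
      rw [← Subgroup.inf_relIndex_right] at h1
      have hle : (H.map L.subtype) ⊓ H' ≤ H' ⊓ L :=
        le_inf inf_le_right (inf_le_left.trans (Subgroup.map_subtype_le H))
      intro h0
      exact h1 (Nat.eq_zero_of_zero_dvd (h0 ▸ Subgroup.relIndex_dvd_of_le_left H' hle))
  -- the image of `H'.subgroupOf L` is `H' ⊓ L`
  have hmap : (H'.subgroupOf L).map L.subtype = H' ⊓ L := Subgroup.subgroupOf_map_subtype H' L
  have hcomm2 : Commensurable H (H'.subgroupOf L) := by
    rw [← commensurable_map_iff L.subtype_injective, hmap]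
    exact hcom.trans hH'L
  refine ⟨H'.subgroupOf L, hcomm2, ?_⟩
  ext g
  constructor
  · intro hg
    rw [mem_commensurator_subgroup_iff, heq] at hg
    rw [Subgroup.mem_normalizer_iff]
    intro h
    rw [Subgroup.mem_subgroupOf, Subgroup.mem_subgroupOf]
    have := (Subgroup.mem_normalizer_iff.mp hg) (h : G)
    simpa using this
  · intro hg
    have h1 : g ∈ Commensurable.commensurator (H'.subgroupOf L) :=
      normalizer_le_commensurator _ hg
    rwa [Commensurable.eq hcomm2]
end

section
/- Let G be a group and let F be a normal subgroup of G such that F is a free group and the quotient group G/F is torsion-free and satisfies condition C. Then G satisfies condition C. -/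
open List

section FreeGroupCombinatorics

variable {α : Type*} [DecidableEq α]

/-- The no-cancellation relation between consecutive letters of a word in a free group:
`Rc p q` means that `p` followed by `q` is not a cancelling pair. -/
def Rc (p q : α × Bool) : Prop := ¬(p.1 = q.1 ∧ p.2 = !q.2)

lemma chain'_reduce (L : List (α × Bool)) : List.Chain' Rc (FreeGroup.reduce L) := by
  induction L with
  | nil => exact List.isChain_nil
  | cons x L ih =>
    rw [FreeGroup.reduce.cons]
    rcases hL : FreeGroup.reduce L with _ | ⟨hd, tl⟩
    · exact List.isChain_singleton _
    · rw [hL] at ih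
      by_cases hc : x.1 = hd.1 ∧ x.2 = !hd.2
      · simpa [hc, List.Chain'] using ih.tail
      · simp only [if_neg hc]
        exact List.isChain_cons_cons.2 ⟨hc, ih⟩

lemma reduce_eq_self_of_chain' {L : List (α × Bool)} (h : List.Chain' Rc L) :
    FreeGroup.reduce L = L := by
  rcases (FreeGroup.reduce.red (L := L)).cases_head with heq | ⟨c, hstep, _⟩
  · exact heq.symm
  · exfalso
    cases hstep with
    | @not L₁ L₂ x b =>
      have := (List.isChain_append_cons_cons.1 h).2.1
      exact this ⟨rfl, by simp⟩

lemma toWord_mk_of_chain' {L : List (α × Bool)} (h : List.Chain' Rc L) :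
    (FreeGroup.mk L).toWord = L := by
  rw [FreeGroup.toWord_mk, reduce_eq_self_of_chain' h]

lemma chain'_toWord (w : FreeGroup α) : List.Chain' Rc w.toWord := by
  have := chain'_reduce w.toWord
  rwa [FreeGroup.reduce_toWord] at this

omit [DecidableEq α] in
lemma head?_flatten_replicate {L : List (α × Bool)} (hL : L ≠ []) {m : ℕ} (hm : 1 ≤ m) :
    ((List.replicate m L).flatten).head? = L.head? := by
  obtain ⟨m, rfl⟩ := Nat.exists_eq_add_of_le hm
  rw [add_comm, List.replicate_succ, List.flatten_cons, List.head?_append_of_ne_nil _ hL]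

omit [DecidableEq α] in
lemma getLast?_flatten_replicate {L : List (α × Bool)} (hL : L ≠ []) {m : ℕ} (hm : 1 ≤ m) :
    ((List.replicate m L).flatten).getLast? = L.getLast? := by
  obtain ⟨m, rfl⟩ := Nat.exists_eq_add_of_le hm
  rw [add_comm, List.replicate_succ', List.flatten_concat, List.getLast?_append_of_ne_nil _ hL]

omit [DecidableEq α] in
lemma chain'_flatten_replicate {L : List (α × Bool)} (h : List.Chain' Rc L)
    (hj : ∀ p ∈ L.getLast?, ∀ q ∈ L.head?, Rc p q) (m : ℕ) :
    List.Chain' Rc ((List.replicate m L).flatten) := by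
  induction m with
  | zero => exact List.isChain_nil
  | succ m ih =>
    rcases eq_or_ne L [] with rfl | hL
    · simp [List.Chain']
    rw [List.replicate_succ, List.flatten_cons]
    refine List.isChain_append.2 ⟨h, ih, ?_⟩
    intro p hp q hq
    rcases Nat.eq_zero_or_pos m with rfl | hm
    · simp at hq
    · rw [head?_flatten_replicate hL hm] at hq
      exact hj p hp q hq

/-- Structure of powers in a free group: for `w ≠ 1` there is `c ≥ 1` (the cyclically reduced
length of `w`) such that `‖w ^ m‖ = m * c + (‖w‖ - c)` for all `m ≥ 1`. -/
lemma norm_pow_formula : ∀ (n : ℕ) (w : FreeGroup α), w.norm = n → w ≠ 1 →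
    ∃ c : ℕ, 1 ≤ c ∧ c ≤ w.norm ∧ ∀ m : ℕ, 1 ≤ m →
      (w ^ m).norm = m * c + (w.norm - c) ∧
      (w ^ m).toWord.head? = w.toWord.head? ∧
      (w ^ m).toWord.getLast? = w.toWord.getLast? := by
  intro n
  induction n using Nat.strong_induction_on with
  | _ n IH =>
  intro w hn hw
  set L := w.toWord with hLdef
  have hL : L ≠ [] := fun h => hw (FreeGroup.toWord_eq_nil_iff.1 h)
  have hchain : List.Chain' Rc L := chain'_toWord w
  have hnorm : w.norm = L.length := rfl
  by_cases hj : ∀ p ∈ L.getLast?, ∀ q ∈ L.head?, Rc p q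
  · -- cyclically reduced case
    refine ⟨L.length, List.length_pos_iff.2 hL, ?_, ?_⟩
    · rw [hnorm]
    · have hLpos : 1 ≤ L.length := List.length_pos_iff.2 hL
      intro m hm
      have hwm : w ^ m = FreeGroup.mk ((List.replicate m L).flatten) := by
        conv_lhs => rw [← FreeGroup.mk_toWord (x := w)]
        rw [FreeGroup.pow_mk]
      have htw : (w ^ m).toWord = (List.replicate m L).flatten := by
        rw [hwm]; exact toWord_mk_of_chain' (chain'_flatten_replicate hchain hj m)
      have hlen : ((List.replicate m L).flatten).length = m * L.length := by
        simp [List.length_flatten, List.map_replicate, List.sum_replicate, smul_eq_mul]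
      constructor
      · show (w ^ m).toWord.length = _
        rw [htw, hlen, hnorm]
        simp
      · constructor
        · rw [htw, head?_flatten_replicate hL hm]
        · rw [htw, getLast?_flatten_replicate hL hm]
  · -- peel off a conjugation
    push_neg at hj
    obtain ⟨p, hp, q, hq, hpq⟩ := hj
    have hpq' : p.1 = q.1 ∧ p.2 = !q.2 := not_not.1 hpq
    obtain ⟨M', hM'⟩ := List.getLast?_eq_some_iff.1 (Option.mem_def.1 hp)
    rcases M' with _ | ⟨q', M⟩
    · -- L = [p], so p = q, contradiction
      exfalso
      rw [hM'] at hq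
      simp at hq
      rw [← hq] at hpq'
      simpa using hpq'.2
    · -- L = q :: M ++ [p]
      have ha : q' = q := by
        have h0 := Option.mem_def.1 hq
        rw [hM'] at h0
        simpa using h0
      rw [ha] at hM'
      have hLeq : L = q :: (M ++ [p]) := by simpa using hM'
      have hchain' : List.Chain' Rc (q :: (M ++ [p])) := hLeq ▸ hchain
      have hchainMp : List.Chain' Rc (M ++ [p]) := hchain'.tail
      have hchainM : List.Chain' Rc M := (List.isChain_append.1 hchainMp).1
      have hMlastp : ∀ x ∈ M.getLast?, Rc x p := by
        intro x hx
        exact (List.isChain_append.1 hchainMp).2.2 x hx p rfl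
      have hqheadM : ∀ y ∈ M.head?, Rc q y := by
        intro y hy
        have := (List.isChain_cons.1 hchain').1
        apply this
        rcases M with _ | ⟨a, M⟩
        · simp at hy
        · simpa using hy
      have hM : M ≠ [] := by
        rintro rfl
        have h3 : Rc q p := List.isChain_pair.1 hchain'
        exact h3 ⟨hpq'.1.symm, by rw [hpq'.2]; simp⟩
      set v := FreeGroup.mk M with hvdef
      have hvt : v.toWord = M := toWord_mk_of_chain' hchainM
      have hv1 : v ≠ 1 := fun h => hM (by rw [← hvt, h, FreeGroup.toWord_one])
      have hvn : v.norm = M.length := by rw [FreeGroup.norm, hvt]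
      have hwn : w.norm = M.length + 2 := by
        rw [hnorm, hLeq]; simp
      have hpval : p = (q.1, !q.2) := Prod.ext hpq'.1 hpq'.2
      have hxinv : (FreeGroup.mk [q])⁻¹ = FreeGroup.mk [p] := by
        rw [FreeGroup.inv_mk]
        congr 1
        simp [FreeGroup.invRev, hpval]
      have hweq : w = FreeGroup.mk [q] * v * (FreeGroup.mk [q])⁻¹ := by
        rw [hxinv, hvdef, FreeGroup.mul_mk, FreeGroup.mul_mk,
          ← FreeGroup.mk_toWord (x := w), ← hLdef, hLeq]
        simp
      obtain ⟨c, hc1, hcle, hprop⟩ := IH M.length (by omega) v (by rw [hvn]) hv1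
      refine ⟨c, hc1, by omega, ?_⟩
      intro m hm
      obtain ⟨hlen, hhead, hlast⟩ := hprop m hm
      set K := (v ^ m).toWord with hKdef
      have hKchain : List.Chain' Rc K := chain'_toWord _
      have hKlen : K.length = m * c + (v.norm - c) := hlen
      have hKne : K ≠ [] := by
        have h1 : 1 * 1 ≤ m * c := Nat.mul_le_mul hm hc1
        have : 0 < K.length := by rw [hKlen]; omega
        exact List.ne_nil_of_length_pos this
      have hKhead : K.head? = M.head? := by rw [hKdef, hhead, hvt]
      have hKlast : K.getLast? = M.getLast? := by rw [hKdef, hlast, hvt]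
      have hchainNew : List.Chain' Rc (q :: (K ++ [p])) := by
        refine List.isChain_cons.2 ?_
        constructor
        · intro y hy
          rw [List.head?_append_of_ne_nil _ hKne, hKhead] at hy
          exact hqheadM y hy
        · rw [List.isChain_append]
          refine ⟨hKchain, by simp, ?_⟩
          intro x hx y hy
          simp only [List.head?_cons, Option.mem_def, Option.some.injEq] at hy
          subst hy
          rw [hKlast] at hx
          exact hMlastp x hx
      have hwm : w ^ m = FreeGroup.mk (q :: (K ++ [p])) := by
        rw [hweq, conj_pow, ← FreeGroup.mk_toWord (x := v ^ m), ← hKdef, hxinv,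
          FreeGroup.mul_mk, FreeGroup.mul_mk]
        simp
      have htw : (w ^ m).toWord = q :: (K ++ [p]) := by
        rw [hwm]; exact toWord_mk_of_chain' hchainNew
      refine ⟨?_, ?_, ?_⟩
      · show (w ^ m).toWord.length = _
        have h2 : v.norm - c + 2 = w.norm - c := by omega
        rw [htw, show (q :: (K ++ [p])).length = K.length + 2 by simp,
          hKlen, add_assoc, h2]
      · rw [htw, hLeq]
        simp
      · rw [htw, hLeq]
        show ((q :: K) ++ [p]).getLast? = ((q :: (M ++ [p]))).getLast?
        rw [List.getLast?_concat]
        show _ = ((q :: M) ++ [p]).getLast?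
        rw [List.getLast?_concat]

lemma fgNorm_pow_le (w : FreeGroup α) : ∀ n : ℕ, (w ^ n).norm ≤ n * w.norm := by
  intro n
  induction n with
  | zero => simp
  | succ n ih =>
    rw [pow_succ]
    calc (w ^ n * w).norm ≤ (w ^ n).norm + w.norm := FreeGroup.norm_mul_le _ _
      _ ≤ n * w.norm + w.norm := by omega
      _ = (n + 1) * w.norm := by ring

lemma fgNorm_zpow_le (w : FreeGroup α) (z : ℤ) : (w ^ z).norm ≤ z.natAbs * w.norm := by
  rcases Int.natAbs_eq z with h | h
  · rw [h, zpow_natCast]; exact fgNorm_pow_le w _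
  · rw [h, zpow_neg, zpow_natCast, FreeGroup.norm_inv_eq, Int.natAbs_neg, Int.natAbs_natCast]
    exact fgNorm_pow_le w _

lemma fg_le_fgNorm_pow (w : FreeGroup α) (hw : w ≠ 1) {m : ℕ} (hm : 1 ≤ m) : m ≤ (w ^ m).norm := by
  obtain ⟨c, hc1, _, hprop⟩ := norm_pow_formula w.norm w rfl hw
  have h := (hprop m hm).1
  have h2 : m * 1 ≤ m * c := Nat.mul_le_mul_left m hc1
  omega

lemma fg_le_fgNorm_zpow (w : FreeGroup α) (hw : w ≠ 1) {z : ℤ} (hz : z ≠ 0) :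
    z.natAbs ≤ (w ^ z).norm := by
  have hz1 : 1 ≤ z.natAbs := Int.natAbs_pos.2 hz
  rcases Int.natAbs_eq z with h | h
  · rw [h, zpow_natCast]
    exact fg_le_fgNorm_pow w hw hz1
  · rw [h, zpow_neg, zpow_natCast, FreeGroup.norm_inv_eq, Int.natAbs_neg, Int.natAbs_natCast]
    exact fg_le_fgNorm_pow w hw hz1

end FreeGroupCombinatorics

section AbstractLemmas

lemma le_of_forall_pow_le {K L C : ℕ} (h : ∀ n : ℕ, K ^ n ≤ L ^ n * C) : K ≤ L := by
  by_contra hlt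
  push_neg at hlt
  have hK : L + 1 ≤ K := hlt
  have hC : 1 ≤ C := by simpa using h 0
  rcases Nat.eq_zero_or_pos L with rfl | hL
  · have h1 := h 1
    simp at h1
    omega
  set n := (C - 1) * L + 1 with hn
  have hL0 : (0:ℝ) < (L:ℝ) := by exact_mod_cast hL
  have hpow : (0:ℝ) < (L:ℝ) ^ n := by positivity
  have hinv : (0:ℝ) ≤ 1 / (L:ℝ) := by positivity
  have hb : 1 + (n:ℝ) * (1/(L:ℝ)) ≤ (1 + 1/(L:ℝ)) ^ n := by
    apply one_add_mul_le_pow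
    linarith
  have h4 : (L:ℝ) ^ n * (1 + 1/(L:ℝ)) ^ n = ((L:ℝ) + 1) ^ n := by
    rw [← mul_pow]
    congr 1
    field_simp
  have h1 : (K:ℝ) ^ n ≤ (L:ℝ) ^ n * C := by exact_mod_cast h n
  have h2 : ((L:ℝ) + 1) ^ n ≤ (K:ℝ) ^ n := by
    apply pow_le_pow_left₀ (by positivity)
    exact_mod_cast hK
  have h3 : (L:ℝ) ^ n * (1 + (n:ℝ) * (1/(L:ℝ))) ≤ (L:ℝ) ^ n * (C:ℝ) := by
    calc (L:ℝ) ^ n * (1 + (n:ℝ) * (1/(L:ℝ)))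
        ≤ (L:ℝ) ^ n * (1 + 1/(L:ℝ)) ^ n := mul_le_mul_of_nonneg_left hb hpow.le
      _ = ((L:ℝ) + 1) ^ n := h4
      _ ≤ (K:ℝ) ^ n := h2
      _ ≤ (L:ℝ) ^ n * C := h1
  have h5 : 1 + (n:ℝ) * (1/(L:ℝ)) ≤ (C:ℝ) := le_of_mul_le_mul_left h3 hpow
  have h6 : (1 + (n:ℝ) * (1/(L:ℝ))) * L = (L:ℝ) + n := by field_simp
  have h7 : (L:ℝ) + n ≤ (C:ℝ) * L := by
    have := mul_le_mul_of_nonneg_right h5 hL0.le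
    rw [h6] at this
    exact this
  have h8 : L + n ≤ C * L := by exact_mod_cast h7
  have h9 : (C - 1) * L = C * L - 1 * L := Nat.sub_mul C 1 L
  have h10 : 1 * L = L := one_mul L
  have h11 : L ≤ C * L := Nat.le_mul_of_pos_left L hC
  omega

/-- If a group `H` carries a "norm" `ν` with the two displayed properties (as the free group
does), and `φ` is an automorphism with `φ (x ^ k) = x ^ l`, `x ≠ 1`, then `|k| ≤ |l|`. -/
lemma natAbs_le_of_conj {H : Type*} [Group H] (ν : H → ℕ)
    (hν1 : ∀ w : H, w ≠ 1 → ∀ z : ℤ, z ≠ 0 → z.natAbs ≤ ν (w ^ z))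
    (hν2 : ∀ (w : H) (z : ℤ), ν (w ^ z) ≤ z.natAbs * ν w)
    (φ : MulAut H) (x : H) (hx : x ≠ 1) (k l : ℤ)
    (hrel : φ (x ^ k) = x ^ l) : k.natAbs ≤ l.natAbs := by
  rcases eq_or_ne k 0 with rfl | hk
  · simp
  have hiter : ∀ n : ℕ, ((φ ^ n) x) ^ (k ^ n) = x ^ (l ^ n) := by
    intro n
    induction n with
    | zero => simp
    | succ n ih =>
      have e1 : (φ ^ (n + 1)) x = (φ ^ n) (φ x) := by rw [pow_succ]; rfl
      calc ((φ ^ (n+1)) x) ^ k ^ (n+1)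
          = ((φ ^ n) (φ x)) ^ k ^ (n+1) := by rw [e1]
        _ = (φ ^ n) ((φ x) ^ k ^ (n+1)) := (map_zpow _ _ _).symm
        _ = (φ ^ n) (((φ x) ^ k) ^ k ^ n) := by rw [pow_succ', zpow_mul]
        _ = (φ ^ n) ((x ^ l) ^ k ^ n) := by rw [← map_zpow φ x k, hrel]
        _ = (φ ^ n) ((x ^ k ^ n) ^ l) := by rw [← zpow_mul, ← zpow_mul, mul_comm]
        _ = ((φ ^ n) (x ^ k ^ n)) ^ l := map_zpow _ _ _
        _ = (((φ ^ n) x) ^ (k ^ n : ℤ)) ^ l := by rw [map_zpow]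
        _ = (x ^ l ^ n) ^ l := by rw [ih]
        _ = x ^ l ^ (n+1) := by rw [← zpow_mul, ← pow_succ]
  have hxn : ∀ n : ℕ, (φ ^ n) x ≠ 1 := by
    intro n h
    exact hx ((φ ^ n).injective (h.trans (map_one (φ ^ n)).symm))
  have key : ∀ n : ℕ, k.natAbs ^ n ≤ l.natAbs ^ n * ν x := by
    intro n
    have h1 : (k ^ n).natAbs ≤ ν (((φ ^ n) x) ^ (k ^ n)) :=
      hν1 _ (hxn n) _ (pow_ne_zero n hk)
    rw [hiter n] at h1
    calc k.natAbs ^ n = (k ^ n).natAbs := (Int.natAbs_pow k n).symm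
      _ ≤ ν (x ^ (l ^ n : ℤ)) := h1
      _ ≤ (l ^ n).natAbs * ν x := hν2 x _
      _ = l.natAbs ^ n * ν x := by rw [Int.natAbs_pow]
  exact le_of_forall_pow_le key

end AbstractLemmas

/-- A group `G` satisfies condition C if for all `g h ∈ G` with `h` of infinite order and
all integers `k, l`, the relation `g * h ^ k * g⁻¹ = h ^ l` implies `|k| = |l|`. -/
def ConditionC (G : Type*) [Group G] : Prop :=
  ∀ g h : G, ¬ IsOfFinOrder h → ∀ k l : ℤ, g * h ^ k * g⁻¹ = h ^ l → |k| = |l|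

/-- If `F` is a normal subgroup of `G` which is a free group, and the quotient `G ⧸ F`
is torsion-free and satisfies condition C, then `G` satisfies condition C. -/
theorem stmt3 {G : Type*} [Group G] (F : Subgroup G) [F.Normal]
    (hfree : IsFreeGroup F)
    (htf : ∀ x : G ⧸ F, x ≠ 1 → ¬ IsOfFinOrder x)
    (hC : ConditionC (G ⧸ F)) : ConditionC G := by
  classical
  intro g h hord k l hrel
  set q : G →* G ⧸ F := QuotientGroup.mk' F with hqdef
  by_cases hqh : q h = 1
  · -- h lies in F
    have hmem : h ∈ F := (QuotientGroup.eq_one_iff h).1 hqh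
    haveI := hfree
    haveI : DecidableEq (IsFreeGroup.Generators F) := Classical.decEq _
    set e : F ≃* FreeGroup (IsFreeGroup.Generators F) := IsFreeGroup.toFreeGroup (G := F)
      with hedef
    set ν : F → ℕ := fun y => (e y).norm with hνdef
    have hν1 : ∀ w : F, w ≠ 1 → ∀ z : ℤ, z ≠ 0 → z.natAbs ≤ ν (w ^ z) := by
      intro w hw z hz
      have hew : e w ≠ 1 := fun hh => hw (e.injective (by simpa using hh))
      have hz' : ν (w ^ z) = ((e w) ^ z).norm := by simp [hνdef, map_zpow]
      rw [hz']
      exact fg_le_fgNorm_zpow _ hew hz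
    have hν2 : ∀ (w : F) (z : ℤ), ν (w ^ z) ≤ z.natAbs * ν w := by
      intro w z
      have hz' : ν (w ^ z) = ((e w) ^ z).norm := by simp [hνdef, map_zpow]
      rw [hz']
      exact fgNorm_zpow_le _ _
    set x : F := ⟨h, hmem⟩ with hxdef
    have hx : x ≠ 1 := by
      intro hh
      apply hord
      have h1 : h = 1 := by simpa [hxdef] using congrArg Subtype.val hh
      rw [h1]
      exact IsOfFinOrder.one
    set φ : MulAut F := MulAut.conjNormal g with hφdef
    have hrelF : φ (x ^ k) = x ^ l := by
      apply Subtype.ext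
      have e1 : ((φ (x ^ k) : F) : G) = g * ((x ^ k : F) : G) * g⁻¹ :=
        MulAut.conjNormal_apply g _
      have e2 : ((x ^ k : F) : G) = h ^ k := by
        rw [SubgroupClass.coe_zpow]
      have e3 : ((x ^ l : F) : G) = h ^ l := by
        rw [SubgroupClass.coe_zpow]
      rw [e1, e2, e3, hrel]
    have hrelF' : φ⁻¹ (x ^ l) = x ^ k := by
      rw [← hrelF]
      exact φ.symm_apply_apply _
    have h1 : k.natAbs ≤ l.natAbs := natAbs_le_of_conj ν hν1 hν2 φ x hx k l hrelF
    have h2 : l.natAbs ≤ k.natAbs := natAbs_le_of_conj ν hν1 hν2 φ⁻¹ x hx l k hrelF'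
    have h3 : k.natAbs = l.natAbs := le_antisymm h1 h2
    rw [Int.abs_eq_natAbs, Int.abs_eq_natAbs, h3]
  · -- the image of h in the quotient is non-trivial, hence of infinite order
    have hfin : ¬ IsOfFinOrder (q h) := htf _ hqh
    have hq : q g * (q h) ^ k * (q g)⁻¹ = (q h) ^ l := by
      rw [← map_zpow, ← map_zpow, ← map_inv, ← map_mul, ← map_mul, hrel]
    exact hC (q g) (q h) hfin k l hq
end

section
/- Let F be a free group and let h ∈ F be a nontrivial element. Then there exists an element r ∈ F such that h lies in the cyclic subgroup ⟨r⟩ generated by r, and every cyclic subgroup of F containing h is contained in ⟨r⟩. In particular, h is contained in a unique maximal infinite cyclic subgroup of F. -/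
open Subgroup

/-- Distinct generators of a free group do not commute. -/
private theorem aux_gens_not_commute {ι : Type*} {a b : ι} (hab : a ≠ b)
    (hcomm : FreeGroup.of a * FreeGroup.of b = FreeGroup.of b * FreeGroup.of a) : False := by
  classical
  let f : ι → Equiv.Perm (Fin 3) := fun x =>
    if x = a then Equiv.swap 0 1 else if x = b then Equiv.swap 1 2 else 1
  have ha : FreeGroup.lift f (FreeGroup.of a) = Equiv.swap 0 1 := by
    simp [f]
  have hb : FreeGroup.lift f (FreeGroup.of b) = Equiv.swap 1 2 := by
    simp [f, hab.symm]
  have := congrArg (FreeGroup.lift f) hcomm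
  rw [map_mul, map_mul, ha, hb] at this
  exact absurd this (by decide)

/-- If the generators of a free group form a subsingleton, the group is cyclic. -/
private theorem aux_cyclic_of_subsingleton {G : Type*} [Group G] [IsFreeGroup G]
    (hs : Subsingleton (IsFreeGroup.Generators G)) :
    ∃ g : G, ∀ x : G, x ∈ Subgroup.zpowers g := by
  classical
  set ι := IsFreeGroup.Generators G with hι
  let e : G ≃* FreeGroup ι := IsFreeGroup.toFreeGroup G
  rcases isEmpty_or_nonempty ι with hempty | ⟨⟨a⟩⟩
  · refine ⟨1, fun x => ?_⟩
    have : e x ∈ Subgroup.closure (Set.range (FreeGroup.of : ι → FreeGroup ι)) := by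
      rw [FreeGroup.closure_range_of]; trivial
    rw [Set.range_eq_empty (FreeGroup.of : ι → FreeGroup ι), Subgroup.closure_empty,
      Subgroup.mem_bot] at this
    have hx1 : x = 1 := by
      apply e.injective; rw [this, map_one]
    rw [hx1]; exact one_mem _
  · refine ⟨e.symm (FreeGroup.of a), fun x => ?_⟩
    have : e x ∈ Subgroup.closure (Set.range (FreeGroup.of : ι → FreeGroup ι)) := by
      rw [FreeGroup.closure_range_of]; trivial
    have hrange : Set.range (FreeGroup.of : ι → FreeGroup ι) = {FreeGroup.of a} := by
      ext w; constructor
      · rintro ⟨c, rfl⟩; rw [Subsingleton.elim c a]; rfl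
      · rintro rfl; exact ⟨a, rfl⟩
    rw [hrange, ← Subgroup.zpowers_eq_closure, Subgroup.mem_zpowers_iff] at this
    obtain ⟨k, hk⟩ := this
    exact ⟨k, by apply e.injective; rw [map_zpow, MulEquiv.apply_symm_apply, hk]⟩

/-- A free group all of whose elements commute is cyclic. -/
private theorem aux_cyclic_of_comm {G : Type*} [Group G] [IsFreeGroup G]
    (hcomm : ∀ x y : G, x * y = y * x) :
    ∃ g : G, ∀ x : G, x ∈ Subgroup.zpowers g := by
  classical
  apply aux_cyclic_of_subsingleton
  constructor
  intro a b
  by_contra hab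
  apply aux_gens_not_commute hab
  let e : G ≃* FreeGroup (IsFreeGroup.Generators G) := IsFreeGroup.toFreeGroup G
  have := hcomm (e.symm (FreeGroup.of a)) (e.symm (FreeGroup.of b))
  have := congrArg e this
  simpa using this

/-- Commuting elements of a free group lie in a common cyclic subgroup. -/
private theorem aux_common_root {β : Type*} {x y : FreeGroup β} (hxy : x * y = y * x) :
    ∃ z : FreeGroup β, x ∈ Subgroup.zpowers z ∧ y ∈ Subgroup.zpowers z := by
  classical
  set H : Subgroup (FreeGroup β) := Subgroup.closure {x, y} with hH
  have hx : x ∈ H := Subgroup.subset_closure (by simp)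
  have hy : y ∈ H := Subgroup.subset_closure (by simp)
  have hcomm : ∀ u v : H, u * v = v * u := by
    rintro ⟨u, hu⟩ ⟨v, hv⟩
    have key : ∀ u v : FreeGroup β, u ∈ H → v ∈ H → u * v = v * u := by
      intro u v hu hv
      refine Subgroup.closure_induction₂ (k := ({x, y} : Set (FreeGroup β)))
        (p := fun u v _ _ => u * v = v * u) ?_ ?_ ?_ ?_ ?_ ?_ ?_ hu hv
      · rintro u v (rfl | rfl) (rfl | rfl)
        · rfl
        · exact hxy
        · exact hxy.symm
        · rfl
      · intro u _; rw [one_mul, mul_one]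
      · intro u _; rw [one_mul, mul_one]
      · intro u v w _ _ _ h1 h2
        rw [mul_assoc, h2, ← mul_assoc, h1, mul_assoc]
      · intro u v w _ _ _ h1 h2
        rw [← mul_assoc, h1, mul_assoc, h2, ← mul_assoc]
      · intro u v _ _ hcm
        exact (Commute.inv_left hcm).eq
      · intro u v _ _ hcm
        exact (Commute.inv_right hcm).eq
    exact Subtype.ext (key u v hu hv)
  obtain ⟨g, hg⟩ := aux_cyclic_of_comm hcomm
  refine ⟨(g : FreeGroup β), ?_, ?_⟩
  · obtain ⟨k, hk⟩ := Subgroup.mem_zpowers_iff.mp (hg ⟨x, hx⟩)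
    exact Subgroup.mem_zpowers_iff.mpr ⟨k, by simpa using congrArg Subtype.val hk⟩
  · obtain ⟨k, hk⟩ := Subgroup.mem_zpowers_iff.mp (hg ⟨y, hy⟩)
    exact Subgroup.mem_zpowers_iff.mpr ⟨k, by simpa using congrArg Subtype.val hk⟩

/-- Anything commuting with a generator of a free group is a power of that generator. -/
private theorem aux_commute_of {ι : Type*} {a : ι} {z : FreeGroup ι}
    (hz : z * FreeGroup.of a = FreeGroup.of a * z) :
    z ∈ Subgroup.zpowers (FreeGroup.of a) := by
  classical
  obtain ⟨p, hzp, hap⟩ := aux_common_root hz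
  obtain ⟨t, hat⟩ := Subgroup.mem_zpowers_iff.mp hap
  let φ : FreeGroup ι →* Multiplicative ℤ :=
    FreeGroup.lift (fun x => if x = a then Multiplicative.ofAdd (1 : ℤ) else 1)
  have h1 : φ (FreeGroup.of a) = Multiplicative.ofAdd 1 := by
    simp [φ]
  have h2 : (φ p) ^ t = Multiplicative.ofAdd 1 := by rw [← map_zpow, hat, h1]
  have h3 : t * (Multiplicative.toAdd (φ p)) = 1 := by
    have := congrArg Multiplicative.toAdd h2
    simpa [toAdd_zpow] using this
  have ht : t = 1 ∨ t = -1 := Int.isUnit_iff.mp (IsUnit.of_mul_eq_one (a := t) _ h3)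
  rcases ht with rfl | rfl
  · rw [zpow_one] at hat; rw [← hat]; exact hzp
  · have : FreeGroup.of a = p⁻¹ := by rw [← hat, zpow_neg_one]
    rw [this, Subgroup.zpowers_inv]; exact hzp

/-- A free group with a nontrivial central element is cyclic. -/
private theorem aux_cyclic_of_center {G : Type*} [Group G] [IsFreeGroup G] {z : G}
    (hz1 : z ≠ 1) (hzc : ∀ x : G, x * z = z * x) :
    ∃ g : G, ∀ x : G, x ∈ Subgroup.zpowers g := by
  classical
  set ι := IsFreeGroup.Generators G with hι
  let e : G ≃* FreeGroup ι := IsFreeGroup.toFreeGroup G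
  apply aux_cyclic_of_subsingleton
  constructor
  intro a b
  by_contra hab
  set w : FreeGroup ι := e z with hw
  have hw1 : w ≠ 1 := fun hcon => hz1 (e.injective (by rw [map_one]; exact hcon))
  have hwc : ∀ u : FreeGroup ι, u * w = w * u := by
    intro u
    have := congrArg e (hzc (e.symm u))
    simpa [hw] using this
  have hwa : w ∈ Subgroup.zpowers (FreeGroup.of a) := aux_commute_of (hwc (FreeGroup.of a)).symm
  have hwb : w ∈ Subgroup.zpowers (FreeGroup.of b) := aux_commute_of (hwc (FreeGroup.of b)).symm
  obtain ⟨i, hi⟩ := Subgroup.mem_zpowers_iff.mp hwa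
  obtain ⟨j, hj⟩ := Subgroup.mem_zpowers_iff.mp hwb
  let φ : FreeGroup ι →* Multiplicative ℤ :=
    FreeGroup.lift (fun x => if x = a then Multiplicative.ofAdd (1 : ℤ) else 1)
  have ha : φ (FreeGroup.of a) = Multiplicative.ofAdd 1 := by simp [φ]
  have hφb : φ w = 1 := by
    rw [← hj, map_zpow]
    have : φ (FreeGroup.of b) = 1 := by simp [φ, Ne.symm hab]
    rw [this, one_zpow]
  have hpow : (φ (FreeGroup.of a)) ^ i = 1 := by rw [← map_zpow, hi, hφb]
  rw [ha] at hpow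
  have hi0 : i = 0 := by
    have := congrArg Multiplicative.toAdd hpow
    simpa [toAdd_zpow] using this
  apply hw1
  rw [← hi, hi0, zpow_zero]

/-- Every nontrivial element `h` of a free group lies in a unique maximal (infinite) cyclic
subgroup: there is `r` with `h ∈ ⟨r⟩` such that every cyclic subgroup containing `h` is
contained in `⟨r⟩`. -/
theorem stmt5 {β : Type*} (h : FreeGroup β) (hh : h ≠ 1) :
    ∃ r : FreeGroup β, h ∈ Subgroup.zpowers r ∧
      ∀ x : FreeGroup β, h ∈ Subgroup.zpowers x →
        Subgroup.zpowers x ≤ Subgroup.zpowers r := by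
  classical
  set C : Subgroup (FreeGroup β) := Subgroup.centralizer {h} with hC
  have hhC : h ∈ C := by
    rw [hC, Subgroup.mem_centralizer_iff]
    rintro g hg
    simp only [Set.mem_singleton_iff] at hg
    subst hg; rfl
  have hz1 : (⟨h, hhC⟩ : C) ≠ 1 := fun hcon => hh (congrArg Subtype.val hcon)
  have hzc : ∀ x : C, x * (⟨h, hhC⟩ : C) = (⟨h, hhC⟩ : C) * x := by
    rintro ⟨x, hx⟩
    apply Subtype.ext
    have := Subgroup.mem_centralizer_iff.mp hx h rfl
    simpa using this.symm
  obtain ⟨g, hg⟩ := aux_cyclic_of_center hz1 hzc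
  refine ⟨(g : FreeGroup β), ?_, ?_⟩
  · obtain ⟨k, hk⟩ := Subgroup.mem_zpowers_iff.mp (hg ⟨h, hhC⟩)
    exact Subgroup.mem_zpowers_iff.mpr ⟨k, by simpa using congrArg Subtype.val hk⟩
  · intro x hx
    rw [Subgroup.zpowers_le]
    obtain ⟨k, hk⟩ := Subgroup.mem_zpowers_iff.mp hx
    have hxC : x ∈ C := by
      rw [hC, Subgroup.mem_centralizer_iff]
      rintro g' hg'
      simp only [Set.mem_singleton_iff] at hg'
      subst hg'
      rw [← hk]
      exact ((Commute.refl x).zpow_left k).eq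
    obtain ⟨k', hk'⟩ := Subgroup.mem_zpowers_iff.mp (hg ⟨x, hxC⟩)
    exact Subgroup.mem_zpowers_iff.mpr ⟨k', by simpa using congrArg Subtype.val hk'⟩
end
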